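/- Let G be a binary quasigroup of order n with operation *. Then for every odd d ≥ 1 the d-iterated quasigroup G has a transversal, and if for some even d' the d'-iterated quasigroup G has a transversal, then the d-iterated quasigroup G has a transversal for every d ≥ d'. -/

import Mathlib

/-- The left-to-right product `((a₁ * a₂) * ⋯) * a_m` of a list of elements of `Fin n`
under a binary operation `op`, where `e` is returned for the empty list
(all uses below have nonempty lists). -/
def leftProd {n : ℕ} (op : Fin n → Fin n → Fin n) (e : Fin n) : List (Fin n) → Fin n
  | [] => e
  | a :: l => l.foldl op a

/-- `SdSet op e d` is the support `S_d(G)` of the `d`-dimensional MDS code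
`M(G^[d-1])` of the `(d-1)`-iterated quasigroup `G` with operation `op`:
the set of `(x₁, …, x_d)` with `((…((x₁ * x₂) * x₃) * …) * x_d = e`,
where `e` plays the role of the fixed element `1` of `Fin n`. -/
def SdSet {n : ℕ} (op : Fin n → Fin n → Fin n) (e : Fin n) (d : ℕ) :
    Set (Fin d → Fin n) :=
  {x | leftProd op e (List.ofFn x) = e}

/-- `IsKMultiplex S k K` says that the multiset `K` is a `k`-multiplex over
`S ⊆ (Fin n)^d`: it consists of `k·n` elements of `S` and, for every coordinate `j`
and every symbol `v`, exactly `k` elements of `K` (counted with multiplicity) have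
`j`-th coordinate equal to `v`. -/
def IsKMultiplex {n d : ℕ} (S : Set (Fin d → Fin n)) (k : ℕ)
    (K : Multiset (Fin d → Fin n)) : Prop :=
  Multiset.card K = k * n ∧ (∀ x ∈ K, x ∈ S) ∧
    ∀ (j : Fin d) (v : Fin n), Multiset.card (K.filter (fun x => x j = v)) = k

/-- `Perk S k` is the number of `k`-multiplexes over `S` (the `k`-multipermanent). -/
noncomputable def Perk {n d : ℕ} (S : Set (Fin d → Fin n)) (k : ℕ) : ℕ :=
  Set.ncard {K : Multiset (Fin d → Fin n) | IsKMultiplex S k K}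

/-- `perk S k` is the number of `k`-plexes in `S` (`k`-multiplexes without repeated
elements), i.e. the `k`-permanent. -/
noncomputable def perk {n d : ℕ} (S : Set (Fin d → Fin n)) (k : ℕ) : ℕ :=
  Set.ncard {K : Multiset (Fin d → Fin n) | K.Nodup ∧ IsKMultiplex S k K}

/-- A transversal of the `d`-iterated quasigroup: a set `T` of `n` elements of
`S_{d+1}(G)` such that in each of the `d+1` coordinates the elements of `T` take
all `n` values. -/
def IsTransversal {n d : ℕ} (S : Set (Fin d → Fin n)) (T : Finset (Fin d → Fin n)) : Prop :=
  T.card = n ∧ (↑T ⊆ S) ∧ ∀ (j : Fin d) (v : Fin n), ∃ x ∈ T, x j = v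

lemma leftProd_snoc {n m : ℕ} (op : Fin n → Fin n → Fin n) (e : Fin n)
    (x : Fin (m + 1) → Fin n) (a : Fin n) :
    leftProd op e (List.ofFn (Fin.snoc x a)) = op (leftProd op e (List.ofFn x)) a := by
  rw [List.ofFn_succ' (Fin.snoc x a)]
  simp only [Fin.snoc_castSucc, Fin.snoc_last, List.concat_eq_append]
  obtain ⟨b, t, h⟩ : ∃ b t, List.ofFn x = b :: t := by
    cases h : List.ofFn x with
    | nil => exact absurd (congrArg List.length h) (by simp)
    | cons b t => exact ⟨b, t, rfl⟩
  rw [h]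
  simp [leftProd, List.foldl_append]

lemma exists_transversal_base {n : ℕ} (op : Fin n → Fin n → Fin n) (e : Fin n)
    (hop : ∀ a : Fin n, Function.Bijective (op a) ∧ Function.Bijective (fun x => op x a)) :
    ∃ T, IsTransversal (SdSet op e 2) T := by
  set σ : Fin n → Fin n := fun a => (Equiv.ofBijective _ (hop a).1).symm e with hσdef
  have hσ_spec : ∀ a, op a (σ a) = e := fun a =>
    (Equiv.ofBijective _ (hop a).1).apply_symm_apply e
  have hσ_surj : Function.Surjective σ := by
    intro b
    obtain ⟨a, ha⟩ := (hop b).2.2 e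
    refine ⟨a, (hop a).1.1 ?_⟩
    rw [hσ_spec a]; exact ha.symm
  set F : Fin n → (Fin 2 → Fin n) := fun i => Fin.snoc (fun _ : Fin 1 => i) (σ i) with hFdef
  have hF0 : ∀ i, F i (Fin.castSucc 0) = i := by
    intro i; simp only [hFdef]
    exact Fin.snoc_castSucc (α := fun _ : Fin 2 => Fin n) (p := fun _ : Fin 1 => i) (x := σ i) (i := (0 : Fin 1))
  have hFinj : Function.Injective F := by
    intro i j h
    have := congrArg (fun f => f (Fin.castSucc 0)) h
    exact (hF0 i).symm.trans (this.trans (hF0 j))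
  refine ⟨Finset.image F Finset.univ, ?_, ?_, ?_⟩
  · rw [Finset.card_image_of_injective _ hFinj, Finset.card_univ, Fintype.card_fin]
  · intro x hx
    simp only [Finset.coe_image, Set.mem_image, Finset.mem_coe, Finset.mem_univ] at hx
    obtain ⟨i, -, rfl⟩ := hx
    show leftProd op e (List.ofFn (F i)) = e
    simp only [hFdef]
    rw [leftProd_snoc]
    have : leftProd op e (List.ofFn (fun _ : Fin 1 => i)) = i := by
      simp [leftProd, List.ofFn_succ]
    rw [this, hσ_spec]
  · intro j v
    induction j using Fin.lastCases with
    | last =>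
      obtain ⟨i, hi⟩ := hσ_surj v
      refine ⟨F i, Finset.mem_image_of_mem F (Finset.mem_univ i), ?_⟩
      simp [hFdef, hi]
      exact Fin.snoc_last (α := fun _ => Fin n) (p := fun _ : Fin 1 => i) (x := v)
    | cast j' =>
      refine ⟨F v, Finset.mem_image_of_mem F (Finset.mem_univ v), ?_⟩
      simp [hFdef]

lemma exists_transversal_step {n m : ℕ} (op : Fin n → Fin n → Fin n) (e : Fin n)
    (hop : ∀ a : Fin n, Function.Bijective (op a) ∧ Function.Bijective (fun x => op x a))
    (hT : ∃ T, IsTransversal (SdSet op e (m + 1)) T) :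
    ∃ T', IsTransversal (SdSet op e (m + 1 + 2)) T' := by
  obtain ⟨T, hTcard, hTsub, hTcov⟩ := hT
  set σ : Fin n → Fin n := fun a => (Equiv.ofBijective _ (hop (op e a)).1).symm e with hσdef
  have hσ_spec : ∀ a, op (op e a) (σ a) = e := fun a =>
    (Equiv.ofBijective _ (hop (op e a)).1).apply_symm_apply e
  have hσ_surj : Function.Surjective σ := by
    intro b
    obtain ⟨c, hc⟩ := (hop b).2.2 e
    obtain ⟨a, ha⟩ := (hop e).1.2 c
    refine ⟨a, (hop (op e a)).1.1 ?_⟩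
    rw [hσ_spec a, ha]; exact hc.symm
  have eqv : T ≃ Fin n := T.equivFinOfCardEq hTcard
  set t : Fin n → (Fin (m + 1) → Fin n) := fun i => (eqv.symm i : Fin (m + 1) → Fin n)
    with htdef
  have ht_mem : ∀ i, t i ∈ T := fun i => (eqv.symm i).2
  have ht_surj : ∀ x ∈ T, ∃ i, t i = x := by
    intro x hx
    exact ⟨eqv ⟨x, hx⟩, by rw [htdef]; simp⟩
  set F : Fin n → (Fin (m + 1 + 2) → Fin n) :=
    fun i => Fin.snoc (Fin.snoc (t i) i) (σ i) with hFdef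
  have hFmid : ∀ i, F i (Fin.castSucc (Fin.last (m + 1))) = i := by
    intro i; simp [hFdef]
  have hFlast : ∀ i, F i (Fin.last (m + 2)) = σ i := by
    intro i; simp [hFdef]
  have hFcast : ∀ i (j : Fin (m + 1)),
      F i (Fin.castSucc (Fin.castSucc j)) = t i j := by
    intro i j; simp [hFdef]
  have hFinj : Function.Injective F := by
    intro i j h
    have := congrArg (fun f => f (Fin.castSucc (Fin.last (m + 1)))) h
    simpa [hFmid] using this
  refine ⟨Finset.image F Finset.univ, ?_, ?_, ?_⟩
  · rw [Finset.card_image_of_injective _ hFinj, Finset.card_univ, Fintype.card_fin]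
  · intro x hx
    simp only [Finset.coe_image, Set.mem_image, Finset.mem_coe, Finset.mem_univ] at hx
    obtain ⟨i, -, rfl⟩ := hx
    show leftProd op e (List.ofFn (F i)) = e
    simp only [hFdef]
    rw [leftProd_snoc, leftProd_snoc]
    have : leftProd op e (List.ofFn (t i)) = e := hTsub (ht_mem i)
    rw [this, hσ_spec]
  · intro j v
    induction j using Fin.lastCases with
    | last =>
      obtain ⟨i, hi⟩ := hσ_surj v
      exact ⟨F i, Finset.mem_image_of_mem F (Finset.mem_univ i), by rw [hFlast, hi]⟩
    | cast j' =>
      induction j' using Fin.lastCases with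
      | last =>
        exact ⟨F v, Finset.mem_image_of_mem F (Finset.mem_univ v), hFmid v⟩
      | cast j'' =>
        obtain ⟨x, hxT, hxv⟩ := hTcov j'' v
        obtain ⟨i, hi⟩ := ht_surj x hxT
        refine ⟨F i, Finset.mem_image_of_mem F (Finset.mem_univ i), ?_⟩
        rw [hFcast, hi, hxv]

lemma exists_transversal_chain {n m : ℕ} (op : Fin n → Fin n → Fin n) (e : Fin n)
    (hop : ∀ a : Fin n, Function.Bijective (op a) ∧ Function.Bijective (fun x => op x a))
    (h : ∃ T, IsTransversal (SdSet op e (m + 1)) T) :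
    ∀ k, ∃ T, IsTransversal (SdSet op e (m + 2 * k + 1)) T := by
  intro k
  induction k with
  | zero => simpa using h
  | succ k ih =>
    have step := exists_transversal_step op e hop ih
    rw [show m + 2 * (k + 1) + 1 = m + 2 * k + 1 + 2 from by ring]
    exact step

/-- For every binary quasigroup `op` of order `n`: every odd-iterated
quasigroup has a transversal, and if the `d'`-iterated quasigroup has a transversal
for some even `d'`, then the `d`-iterated quasigroup has a transversal for every
`d ≥ d'`. -/
theorem transversals_of_iterated_quasigroup {n : ℕ} (op : Fin n → Fin n → Fin n) (e : Fin n)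
    (hop : ∀ a : Fin n, Function.Bijective (op a) ∧ Function.Bijective (fun x => op x a)) :
    (∀ d : ℕ, Odd d → ∃ T, IsTransversal (SdSet op e (d + 1)) T) ∧
    (∀ d' : ℕ, Even d' → 1 ≤ d' → (∃ T, IsTransversal (SdSet op e (d' + 1)) T) →
      ∀ d : ℕ, d' ≤ d → ∃ T, IsTransversal (SdSet op e (d + 1)) T) := by
  have hodd : ∀ d : ℕ, Odd d → ∃ T, IsTransversal (SdSet op e (d + 1)) T := by
    intro d hd
    obtain ⟨k, rfl⟩ := hd
    have h := exists_transversal_chain op e hop (exists_transversal_base op e hop) k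
    rw [show 2 * k + 1 + 1 = 1 + 2 * k + 1 from by ring]
    exact h
  refine ⟨hodd, ?_⟩
  intro d' hd' _ hT d hdd
  rcases Nat.even_or_odd d with hdev | hdodd
  · obtain ⟨a, ha⟩ := hd'
    obtain ⟨b, hb⟩ := hdev
    obtain ⟨k, rfl⟩ : ∃ k, d = d' + 2 * k := ⟨b - a, by omega⟩
    exact exists_transversal_chain op e hop hT k
  · exact hodd d hdodd
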